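/- arXiv:1401.2659 — 2 statements merged into one kernel-verified Lean document; each statement's English description precedes it below -/
import Mathlib

section
/- The partition function p(n) takes each value of parity infinitely often. -/
open Finset
namespace Kolberg
def mx (S : Finset ℕ) : ℕ := S.sup id
def mn (S : Finset ℕ) : ℕ := if h : S.Nonempty then S.min' h else 0
def ra (S : Finset ℕ) : ℕ := mx S + 1 - (S.filter (fun x => Icc x (mx S) ⊆ S)).card

def frk (S : Finset ℕ) : Finset ℕ :=
  if ¬ S.Nonempty then S
  else if ra S = mn S ∧ (mx S + 1 = 2 * mn S ∨ mx S + 2 = 2 * mn S) then S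
  else if mn S + ra S ≤ mx S + 1 then
    ((S.erase (mn S)) \ Icc (mx S + 1 - mn S) (mx S)) ∪ Icc (mx S + 2 - mn S) (mx S + 1)
  else (S \ Icc (ra S) (mx S)) ∪ insert (mx S + 1 - ra S) (Icc (ra S - 1) (mx S - 1))

section basics
variable {S : Finset ℕ}

lemma le_mx {x : ℕ} (hx : x ∈ S) : x ≤ mx S := Finset.le_sup (f := id) hx

lemma mx_mem (h : S.Nonempty) : mx S ∈ S := by
  have h1 : S.max' h = S.sup' h id := S.max'_eq_sup' h
  have h2 : S.sup' h id = S.sup id := Finset.sup'_eq_sup h id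
  have := S.max'_mem h
  rwa [h1, h2] at this

lemma mx_eq {b : ℕ} (hb : b ∈ S) (hball : ∀ x ∈ S, x ≤ b) : mx S = b :=
  le_antisymm (Finset.sup_le hball) (le_mx hb)

lemma mn_mem (h : S.Nonempty) : mn S ∈ S := by
  rw [mn, dif_pos h]; exact S.min'_mem h

lemma mn_le {x : ℕ} (hx : x ∈ S) : mn S ≤ x := by
  have h : S.Nonempty := ⟨x, hx⟩
  rw [mn, dif_pos h]; exact S.min'_le x hx

lemma mn_eq {b : ℕ} (hb : b ∈ S) (hball : ∀ x ∈ S, b ≤ x) : mn S = b :=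
  le_antisymm (mn_le hb) (hball _ (mn_mem ⟨b, hb⟩))

lemma mn_pos (h0 : 0 ∉ S) (h : S.Nonempty) : 1 ≤ mn S := by
  have := mn_mem h
  rcases Nat.eq_zero_or_pos (mn S) with h1 | h1
  · rw [h1] at this; exact absurd this h0
  · exact h1

lemma filter_run_eq (h0 : 0 ∉ S) {c : ℕ} (hcM : c ≤ mx S)
    (hIcc : Icc c (mx S) ⊆ S) (hc : c - 1 ∉ S) :
    S.filter (fun x => Icc x (mx S) ⊆ S) = Icc c (mx S) := by
  have hc1 : 1 ≤ c := by
    rcases Nat.eq_zero_or_pos c with h | h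
    · subst h; exact absurd (hIcc (by simp [mem_Icc])) h0
    · exact h
  ext x
  simp only [mem_filter, mem_Icc]
  constructor
  · rintro ⟨hxS, hx⟩
    refine ⟨?_, le_mx hxS⟩
    by_contra hlt
    push_neg at hlt
    exact hc (hx (by simp only [mem_Icc]; omega))
  · rintro ⟨h1, h2⟩
    exact ⟨hIcc (by simp [mem_Icc, h1, h2]), fun y hy => hIcc (by simp only [mem_Icc] at hy ⊢; omega)⟩

lemma ra_eq (h0 : 0 ∉ S) {c : ℕ} (hcM : c ≤ mx S)
    (hIcc : Icc c (mx S) ⊆ S) (hc : c - 1 ∉ S) : ra S = c := by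
  rw [ra, filter_run_eq h0 hcM hIcc hc, Nat.card_Icc]; omega

lemma ra_spec (h0 : 0 ∉ S) (h : S.Nonempty) :
    1 ≤ ra S ∧ ra S ≤ mx S ∧ Icc (ra S) (mx S) ⊆ S ∧ ra S - 1 ∉ S ∧ mn S ≤ ra S := by
  classical
  set R := S.filter (fun x => Icc x (mx S) ⊆ S) with hR
  have hMR : mx S ∈ R := by
    simp only [hR, mem_filter]
    exact ⟨mx_mem h, fun y hy => by simp only [mem_Icc] at hy; have := le_antisymm hy.2 hy.1; rw [this]; exact mx_mem h⟩
  have hRne : R.Nonempty := ⟨_, hMR⟩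
  set c := R.min' hRne with hcdef
  have hcR : c ∈ R := R.min'_mem hRne
  have hcS : c ∈ S := (mem_filter.1 hcR).1
  have hcIcc : Icc c (mx S) ⊆ S := (mem_filter.1 hcR).2
  have hc1 : 1 ≤ c := by
    rcases Nat.eq_zero_or_pos c with h' | h'
    · rw [h'] at hcS; exact absurd hcS h0
    · exact h'
  have hcM : c ≤ mx S := le_mx hcS
  have hcpred : c - 1 ∉ S := by
    intro hmem
    have : c - 1 ∈ R := by
      simp only [hR, mem_filter]
      refine ⟨hmem, fun y hy => ?_⟩
      simp only [mem_Icc] at hy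
      rcases Nat.lt_or_ge y c with h' | h'
      · have : y = c - 1 := by omega
        rw [this]; exact hmem
      · exact hcIcc (by simp [mem_Icc, h', hy.2])
    have := R.min'_le _ this
    omega
  have hra : ra S = c := ra_eq h0 hcM hcIcc hcpred
  rw [hra]
  exact ⟨hc1, hcM, hcIcc, hcpred, mn_le hcS⟩

lemma ra_le_of_run (h0 : 0 ∉ S) {c : ℕ} (hcM : c ≤ mx S) (hIcc : Icc c (mx S) ⊆ S) :
    ra S ≤ c := by
  have hsub : Icc c (mx S) ⊆ S.filter (fun x => Icc x (mx S) ⊆ S) := by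
    intro x hx
    simp only [mem_Icc] at hx
    simp only [mem_filter]
    exact ⟨hIcc (by simp [mem_Icc, hx.1, hx.2]), fun y hy => hIcc (by simp only [mem_Icc] at hy ⊢; omega)⟩
  have := Finset.card_le_card hsub
  rw [Nat.card_Icc] at this
  rw [ra]; omega

end basics

section franklin
variable {S : Finset ℕ}

lemma frkA (h0 : 0 ∉ S) (hne : S.Nonempty)
    (hnf : ¬(ra S = mn S ∧ (mx S + 1 = 2 * mn S ∨ mx S + 2 = 2 * mn S)))
    (hA : mn S + ra S ≤ mx S + 1) :
    frk S = ((S.erase (mn S)) \ Icc (mx S + 1 - mn S) (mx S)) ∪ Icc (mx S + 2 - mn S) (mx S + 1)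
    ∧ 0 ∉ frk S ∧ (∑ x ∈ frk S, x) = ∑ x ∈ S, x ∧ (frk S).card + 1 = S.card
    ∧ frk (frk S) = S := by
  classical
  obtain ⟨ha1, haM, haIcc, hapred, hsa⟩ := ra_spec h0 hne
  set M := mx S with hM
  set s := mn S with hs
  set a := ra S with ha
  have hs1 : 1 ≤ s := mn_pos h0 hne
  have hsM : s ≤ M := le_mx (mn_mem hne)
  have h2s : 2 * s ≤ M := by
    by_contra hcon
    push_neg at hcon
    have has : a = s := by omega
    exact hnf ⟨has, by omega⟩
  have hTsubS : Icc (M + 1 - s) M ⊆ S := fun x hx => haIcc (by simp only [mem_Icc] at hx ⊢; omega)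
  set SA := ((S.erase s) \ Icc (M + 1 - s) M) ∪ Icc (M + 2 - s) (M + 1) with hSA
  have memSA : ∀ x : ℕ, x ∈ SA ↔ ((x ∈ S ∧ x ≠ s ∧ x + s ≤ M) ∨ (M + 2 - s ≤ x ∧ x ≤ M + 1)) := by
    intro x
    simp only [hSA, mem_union, mem_sdiff, mem_erase, mem_Icc]
    rcases em (x ∈ S) with hx | hx
    · have hxM := le_mx hx
      simp only [hx, true_and, and_true]
      omega
    · simp only [hx, false_and, and_false, false_or]
  have hfrk : frk S = SA := by
    rw [frk, if_neg (not_not_intro hne), if_neg hnf, if_pos hA]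
  have hTerase : Icc (M + 1 - s) M ⊆ S.erase s := by
    intro x hx
    have hx' := hx
    simp only [mem_Icc] at hx'
    exact mem_erase.2 ⟨by omega, hTsubS hx⟩
  have hdisj : Disjoint ((S.erase s) \ Icc (M + 1 - s) M) (Icc (M + 2 - s) (M + 1)) := by
    rw [Finset.disjoint_left]
    intro x hx hx2
    simp only [mem_sdiff, mem_erase, mem_Icc] at hx hx2
    have := le_mx hx.1.2
    omega
  have hshift : Icc (M + 2 - s) (M + 1) = (Icc (M + 1 - s) M).image (· + 1) := by
    rw [image_add_right_Icc]
    congr 1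
    omega
  have hsum_shift : ∑ x ∈ Icc (M + 2 - s) (M + 1), x = (∑ x ∈ Icc (M + 1 - s) M, x) + s := by
    rw [hshift, Finset.sum_image (by intro x _ y _ h; simp only at h; omega), Finset.sum_add_distrib,
      Finset.sum_const, Nat.card_Icc]
    simp only [smul_eq_mul, mul_one]
    omega
  have hsum1 : (∑ x ∈ (S.erase s) \ Icc (M + 1 - s) M, x) + ∑ x ∈ Icc (M + 1 - s) M, x
      = ∑ x ∈ S.erase s, x := Finset.sum_sdiff hTerase
  have hsum2 : (∑ x ∈ S.erase s, x) + s = ∑ x ∈ S, x :=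
    Finset.sum_erase_add S _ (mn_mem hne)
  have hsum : ∑ x ∈ SA, x = ∑ x ∈ S, x := by
    rw [hSA, Finset.sum_union hdisj, hsum_shift]
    omega
  have hc1 : ((S.erase s) \ Icc (M + 1 - s) M).card + (Icc (M + 1 - s) M).card
      = (S.erase s).card := Finset.card_sdiff_add_card_eq_card hTerase
  have hc2 : (S.erase s).card + 1 = S.card := by
    rw [Finset.card_erase_of_mem (mn_mem hne)]
    have hSc : 1 ≤ S.card := Finset.card_pos.2 hne
    omega
  have hcard : SA.card + 1 = S.card := by
    rw [hSA, Finset.card_union_of_disjoint hdisj]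
    simp only [Nat.card_Icc] at hc1 ⊢
    omega
  have h0' : 0 ∉ SA := by
    rw [memSA]
    rintro (⟨h1, _, _⟩ | ⟨h1, _⟩)
    · exact h0 h1
    · omega
  have hne' : SA.Nonempty := ⟨M + 1, (memSA _).2 (Or.inr ⟨by omega, le_refl _⟩)⟩
  have hM' : mx SA = M + 1 := by
    apply mx_eq ((memSA _).2 (Or.inr ⟨by omega, le_refl _⟩))
    intro x hx
    rw [memSA] at hx
    rcases hx with ⟨_, _, h⟩ | ⟨_, h⟩ <;> omega
  have ha' : ra SA = M + 2 - s := by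
    apply ra_eq h0'
    · omega
    · intro x hx
      simp only [mem_Icc, hM'] at hx
      exact (memSA _).2 (Or.inr hx)
    · rw [memSA]
      rintro (⟨h1, _, h3⟩ | ⟨h1, _⟩) <;> omega
  have hs' : s < mn SA := by
    have h1 := mn_mem hne'
    rw [memSA] at h1
    rcases h1 with ⟨hS, hne2, _⟩ | ⟨h1, _⟩
    · have := mn_le (S := S) hS
      omega
    · omega
  have hnf' : ¬(ra SA = mn SA ∧ (mx SA + 1 = 2 * mn SA ∨ mx SA + 2 = 2 * mn SA)) := by
    rintro ⟨h1, h2⟩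
    rw [ha'] at h1
    rw [hM'] at h2
    omega
  have hB' : ¬ (mn SA + ra SA ≤ mx SA + 1) := by
    rw [ha', hM']
    omega
  have hback : frk SA = S := by
    rw [frk, if_neg (not_not_intro hne'), if_neg hnf', if_neg hB']
    have e1 : mx SA + 1 - ra SA = s := by rw [ha', hM']; omega
    have e2 : ra SA - 1 = M + 1 - s := by rw [ha']; omega
    have e3 : mx SA - 1 = M := by rw [hM']; omega
    rw [e1, e2, e3, hM', ha']
    ext x
    simp only [mem_union, mem_sdiff, mem_insert, mem_Icc, memSA]
    rcases em (x ∈ S) with hx | hx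
    · have hxM := le_mx hx
      have hxs := mn_le hx
      simp only [hx, true_and, iff_true]
      omega
    · have hnT : ¬(M + 1 - s ≤ x ∧ x ≤ M) := fun h => hx (hTsubS (mem_Icc.2 ⟨h.1, h.2⟩))
      have hns : x ≠ s := fun h => hx (h ▸ mn_mem hne)
      simp only [hx, false_and, and_false, false_or, iff_false]
      omega
  rw [hfrk]
  exact ⟨rfl, h0', hsum, hcard, hback⟩

lemma frkB (h0 : 0 ∉ S) (hne : S.Nonempty)
    (hnf : ¬(ra S = mn S ∧ (mx S + 1 = 2 * mn S ∨ mx S + 2 = 2 * mn S)))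
    (hB : ¬ (mn S + ra S ≤ mx S + 1)) :
    frk S = (S \ Icc (ra S) (mx S)) ∪ insert (mx S + 1 - ra S) (Icc (ra S - 1) (mx S - 1))
    ∧ 0 ∉ frk S ∧ (∑ x ∈ frk S, x) = ∑ x ∈ S, x ∧ (frk S).card = S.card + 1
    ∧ frk (frk S) = S := by
  classical
  obtain ⟨ha1, haM, haIcc, hapred, hsa⟩ := ra_spec h0 hne
  set M := mx S with hM
  set s := mn S with hs
  set a := ra S with ha
  have hs1 : 1 ≤ s := mn_pos h0 hne
  have hsM : s ≤ M := le_mx (mn_mem hne)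
  push_neg at hB
  -- key : 2*a ≥ M+3
  have h2a : M + 3 ≤ 2 * a := by
    rcases eq_or_lt_of_le hsa with heq | hlt
    · -- s = a
      have : ¬(M + 1 = 2 * s ∨ M + 2 = 2 * s) := fun h => hnf ⟨heq.symm, h⟩
      omega
    · -- s < a, so s ≤ a - 2 since a - 1 ∉ S
      have hsa2 : s + 2 ≤ a := by
        by_contra hcon
        push_neg at hcon
        have hseq : s = a - 1 := by omega
        have hmm : a - 1 ∈ S := by rw [← hseq]; exact mn_mem hne
        exact hapred hmm
      omega
  have ha3 : 3 ≤ a := by omega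
  set SB := (S \ Icc a M) ∪ insert (M + 1 - a) (Icc (a - 1) (M - 1)) with hSB
  have memSB : ∀ x : ℕ, x ∈ SB ↔ ((x ∈ S ∧ x < a) ∨ x = M + 1 - a ∨ (a - 1 ≤ x ∧ x ≤ M - 1)) := by
    intro x
    simp only [hSB, mem_union, mem_sdiff, mem_insert, mem_Icc]
    rcases em (x ∈ S) with hx | hx
    · have hxM := le_mx hx
      simp only [hx, true_and]
      omega
    · simp only [hx, false_and, false_or]
  have hfrk : frk S = SB := by
    rw [frk, if_neg (not_not_intro hne), if_neg hnf,
      if_neg (show ¬(mn S + ra S ≤ mx S + 1) by omega)]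
  have hdisj : Disjoint (S \ Icc a M) (insert (M + 1 - a) (Icc (a - 1) (M - 1))) := by
    rw [Finset.disjoint_left]
    intro x hx hx2
    simp only [mem_sdiff, mem_Icc] at hx
    simp only [mem_insert, mem_Icc] at hx2
    have h1 := le_mx hx.1
    have h2 := mn_le hx.1
    rcases Nat.lt_or_ge x (a - 1) with h | h
    · omega
    · -- x ∈ S, a - 1 ≤ x < a impossible since a - 1 ∉ S
      have : x = a - 1 := by omega
      exact hapred (this ▸ hx.1)
  have hnotmem : (M + 1 - a) ∉ Icc (a - 1) (M - 1) := by
    simp only [mem_Icc]; omega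
  have hshift : Icc a M = (Icc (a - 1) (M - 1)).image (· + 1) := by
    rw [image_add_right_Icc]
    congr 1 <;> omega
  have hsum_shift : ∑ x ∈ Icc a M, x = (∑ x ∈ Icc (a - 1) (M - 1), x) + (M + 1 - a) := by
    rw [hshift, Finset.sum_image (by intro x _ y _ h; simp only at h; omega), Finset.sum_add_distrib,
      Finset.sum_const, Nat.card_Icc]
    simp only [smul_eq_mul, mul_one]
    omega
  have hsum1 : (∑ x ∈ S \ Icc a M, x) + ∑ x ∈ Icc a M, x = ∑ x ∈ S, x :=
    Finset.sum_sdiff haIcc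
  have hsum : ∑ x ∈ SB, x = ∑ x ∈ S, x := by
    rw [hSB, Finset.sum_union hdisj, Finset.sum_insert hnotmem]
    omega
  have hc1 : (S \ Icc a M).card + (Icc a M).card = S.card :=
    Finset.card_sdiff_add_card_eq_card haIcc
  have hcard : SB.card = S.card + 1 := by
    rw [hSB, Finset.card_union_of_disjoint hdisj, Finset.card_insert_of_notMem hnotmem]
    simp only [Nat.card_Icc] at hc1 ⊢
    omega
  have h0' : 0 ∉ SB := by
    rw [memSB]
    rintro (⟨h1, _⟩ | h1 | ⟨h1, _⟩)
    · exact h0 h1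
    · omega
    · omega
  have hmem1 : M - 1 ∈ SB := (memSB _).2 (Or.inr (Or.inr ⟨by omega, le_refl _⟩))
  have hne' : SB.Nonempty := ⟨M - 1, hmem1⟩
  have hM' : mx SB = M - 1 := by
    apply mx_eq hmem1
    intro x hx
    rw [memSB] at hx
    rcases hx with ⟨_, h⟩ | h | ⟨_, h⟩ <;> omega
  have hs' : mn SB = M + 1 - a := by
    apply mn_eq ((memSB _).2 (Or.inr (Or.inl rfl)))
    intro x hx
    rw [memSB] at hx
    rcases hx with ⟨hxS, _⟩ | h | ⟨h, _⟩
    · have := mn_le hxS; omega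
    · omega
    · omega
  have ha' : ra SB ≤ a - 1 := by
    have := ra_le_of_run (S := SB) h0' (c := a - 1) (by rw [hM']; omega)
      (by intro x hx; rw [hM'] at hx; exact (memSB _).2 (Or.inr (Or.inr (mem_Icc.1 hx))))
    exact this
  have hnf' : ¬(ra SB = mn SB ∧ (mx SB + 1 = 2 * mn SB ∨ mx SB + 2 = 2 * mn SB)) := by
    rintro ⟨_, h2⟩
    rw [hM', hs'] at h2
    omega
  have hA' : mn SB + ra SB ≤ mx SB + 1 := by
    rw [hs', hM']
    omega
  have hback : frk SB = S := by
    rw [frk, if_neg (not_not_intro hne'), if_neg hnf', if_pos hA']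
    have e1 : mx SB + 1 - mn SB = a - 1 := by rw [hM', hs']; omega
    have e2 : mx SB + 2 - mn SB = a := by rw [hM', hs']; omega
    rw [e1, e2, hM', hs']
    have e4 : M - 1 + 1 = M := by omega
    rw [e4]
    ext x
    simp only [mem_union, mem_sdiff, mem_erase, mem_Icc, memSB]
    rcases em (x ∈ S) with hx | hx
    · have hxM := le_mx hx
      have hxs := mn_le hx
      have hxa : x ≠ a - 1 := fun h => hapred (h ▸ hx)
      simp only [hx, true_and, iff_true]
      omega
    · have hnT : ¬(a ≤ x ∧ x ≤ M) := fun h => hx (haIcc (mem_Icc.2 ⟨h.1, h.2⟩))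
      simp only [hx, false_and, false_or, iff_false]
      omega
  rw [hfrk]
  exact ⟨rfl, h0', hsum, hcard, hback⟩

lemma frk_empty : frk (∅ : Finset ℕ) = ∅ := by
  rw [frk, if_pos (by simp)]

lemma frk_of_fixedcond (hne : S.Nonempty)
    (hf : ra S = mn S ∧ (mx S + 1 = 2 * mn S ∨ mx S + 2 = 2 * mn S)) : frk S = S := by
  rw [frk, if_neg (not_not_intro hne), if_pos hf]

lemma frk_invol (h0 : 0 ∉ S) : frk (frk S) = S := by
  classical
  rcases em S.Nonempty with hne | hne
  · rcases em (ra S = mn S ∧ (mx S + 1 = 2 * mn S ∨ mx S + 2 = 2 * mn S)) with hf | hf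
    · rw [frk_of_fixedcond hne hf, frk_of_fixedcond hne hf]
    · rcases em (mn S + ra S ≤ mx S + 1) with hA | hA
      · exact (frkA h0 hne hf hA).2.2.2.2
      · exact (frkB h0 hne hf hA).2.2.2.2
  · rw [not_nonempty_iff_eq_empty] at hne
    subst hne
    rw [frk_empty, frk_empty]

lemma frk_zero_notMem (h0 : 0 ∉ S) : 0 ∉ frk S := by
  classical
  rcases em S.Nonempty with hne | hne
  · rcases em (ra S = mn S ∧ (mx S + 1 = 2 * mn S ∨ mx S + 2 = 2 * mn S)) with hf | hf
    · rw [frk_of_fixedcond hne hf]; exact h0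
    · rcases em (mn S + ra S ≤ mx S + 1) with hA | hA
      · exact (frkA h0 hne hf hA).2.1
      · exact (frkB h0 hne hf hA).2.1
  · rw [not_nonempty_iff_eq_empty] at hne
    subst hne
    rw [frk_empty]; exact h0

lemma frk_sum (h0 : 0 ∉ S) : ∑ x ∈ frk S, x = ∑ x ∈ S, x := by
  classical
  rcases em S.Nonempty with hne | hne
  · rcases em (ra S = mn S ∧ (mx S + 1 = 2 * mn S ∨ mx S + 2 = 2 * mn S)) with hf | hf
    · rw [frk_of_fixedcond hne hf]
    · rcases em (mn S + ra S ≤ mx S + 1) with hA | hA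
      · exact (frkA h0 hne hf hA).2.2.1
      · exact (frkB h0 hne hf hA).2.2.1
  · rw [not_nonempty_iff_eq_empty] at hne
    subst hne
    rw [frk_empty]

lemma frk_fixed_iff (h0 : 0 ∉ S) :
    frk S = S ↔ S = ∅ ∨ ∃ k, 1 ≤ k ∧ (S = Icc k (2*k - 1) ∨ S = Icc (k+1) (2*k)) := by
  classical
  constructor
  · intro hfix
    rcases em S.Nonempty with hne | hne
    · rcases em (ra S = mn S ∧ (mx S + 1 = 2 * mn S ∨ mx S + 2 = 2 * mn S)) with hf | hf
      · right
        obtain ⟨ha1, haM, haIcc, hapred, hsa⟩ := ra_spec h0 hne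
        have hs1 : 1 ≤ mn S := mn_pos h0 hne
        set s := mn S with hsdef
        set M := mx S with hMdef
        have hSIcc : S = Icc s M := by
          apply Finset.Subset.antisymm
          · intro x hx
            simp only [mem_Icc]
            exact ⟨mn_le hx, le_mx hx⟩
          · intro x hx
            apply haIcc
            simp only [mem_Icc] at hx ⊢
            omega
        rcases hf.2 with h2 | h2
        · refine ⟨s, hs1, Or.inl ?_⟩
          rw [hSIcc]
          congr 1
          omega
        · have hsM : s ≤ M := le_mx (mn_mem hne)
          refine ⟨s - 1, by omega, Or.inr ?_⟩
          rw [hSIcc]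
          congr 1 <;> omega
      · exfalso
        rcases em (mn S + ra S ≤ mx S + 1) with hA | hA
        · have := (frkA h0 hne hf hA).2.2.2.1
          rw [hfix] at this
          omega
        · have := (frkB h0 hne hf hA).2.2.2.1
          rw [hfix] at this
          omega
    · left
      rwa [not_nonempty_iff_eq_empty] at hne
  · rintro (rfl | ⟨k, hk, rfl | rfl⟩)
    · exact frk_empty
    · have hne : (Icc k (2*k-1)).Nonempty := ⟨k, by simp only [mem_Icc]; omega⟩
      have hmx : mx (Icc k (2*k-1)) = 2*k - 1 :=
        mx_eq (by simp only [mem_Icc]; omega) (fun x hx => by simp only [mem_Icc] at hx; omega)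
      have hmn : mn (Icc k (2*k-1)) = k :=
        mn_eq (by simp only [mem_Icc]; omega) (fun x hx => by simp only [mem_Icc] at hx; omega)
      have hra : ra (Icc k (2*k-1)) = k := by
        apply ra_eq h0
        · rw [hmx]; omega
        · rw [hmx]
        · simp only [mem_Icc]; omega
      exact frk_of_fixedcond hne ⟨by rw [hra, hmn], Or.inl (by rw [hmx, hmn]; omega)⟩
    · have hne : (Icc (k+1) (2*k)).Nonempty := ⟨k+1, by simp only [mem_Icc]; omega⟩
      have hmx : mx (Icc (k+1) (2*k)) = 2*k :=
        mx_eq (by simp only [mem_Icc]; omega) (fun x hx => by simp only [mem_Icc] at hx; omega)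
      have hmn : mn (Icc (k+1) (2*k)) = k + 1 :=
        mn_eq (by simp only [mem_Icc]; omega) (fun x hx => by simp only [mem_Icc] at hx; omega)
      have hra : ra (Icc (k+1) (2*k)) = k + 1 := by
        apply ra_eq h0
        · rw [hmx]; omega
        · rw [hmx]
        · simp only [mem_Icc]; omega
      exact frk_of_fixedcond hne ⟨by rw [hra, hmn], Or.inr (by rw [hmx, hmn]; omega)⟩

end franklin

-- Gauss sum over Icc
lemma two_mul_sum_Icc : ∀ (b a : ℕ), 2 * (∑ x ∈ Icc a b, x) = (a + b) * (b + 1 - a) := by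
  intro b
  induction b with
  | zero => intro a; rcases Nat.eq_zero_or_pos a with rfl | ha
            · simp
            · rw [Finset.Icc_eq_empty (by omega)]; simp; omega
  | succ n ih =>
    intro a
    rcases le_or_gt a (n+1) with h | h
    · rw [Finset.sum_Icc_succ_top h, Nat.mul_add, ih a]
      rcases Nat.eq_or_lt_of_le h with h1 | h1
      · subst h1
        have e1 : n + 1 - (n+1) = 0 := by omega
        have e2 : n + 1 + 1 - (n+1) = 1 := by omega
        rw [e1, e2, Nat.mul_zero, Nat.mul_one]
        omega
      · have ha : a ≤ n := by omega
        obtain ⟨c, hc⟩ : ∃ c, n = a + c := ⟨n - a, by omega⟩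
        subst hc
        have e1 : a + c + 1 - a = c + 1 := by omega
        have e2 : a + c + 1 + 1 - a = c + 2 := by omega
        rw [e1, e2]
        ring
    · rw [Finset.Icc_eq_empty (by omega)]
      simp
      omega


def IsPent (m : ℕ) : Prop := ∃ k : ℕ, 2 * m = k * (3 * k + 1) ∨ 2 * m = (k + 1) * (3 * k + 2)

def DPfin (n : ℕ) : Finset (Finset ℕ) :=
  ((range (n+1)).powerset).filter (fun S => 0 ∉ S ∧ ∑ x ∈ S, x = n)

lemma mem_DPfin {n : ℕ} {S : Finset ℕ} : S ∈ DPfin n ↔ 0 ∉ S ∧ ∑ x ∈ S, x = n := by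
  rw [DPfin, mem_filter, mem_powerset]
  constructor
  · rintro ⟨_, h⟩; exact h
  · rintro ⟨h1, h2⟩
    refine ⟨?_, h1, h2⟩
    intro x hx
    rw [mem_range]
    have h3 : x ≤ ∑ y ∈ S, y := Finset.single_le_sum (fun i _ => Nat.zero_le i) hx
    omega

lemma sum_stair1 {k : ℕ} (hk : 1 ≤ k) : 2 * (∑ x ∈ Icc k (2*k - 1), x) = k * (3 * k - 1) := by
  rw [two_mul_sum_Icc]
  cases' k with k
  · omega
  · have e1 : 2 * (k+1) - 1 = 2*k+1 := by omega
    have e2 : 3 * (k+1) - 1 = 3*k+2 := by omega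
    rw [e1, e2]
    have e3 : 2*k+1+1-(k+1) = k+1 := by omega
    rw [e3]
    ring
lemma sum_stair2 (k : ℕ) : 2 * (∑ x ∈ Icc (k+1) (2*k), x) = k * (3 * k + 1) := by
  rcases Nat.eq_zero_or_pos k with rfl | hk
  · simp
  · rw [two_mul_sum_Icc]
    have e3 : 2*k+1-(k+1) = k := by omega
    rw [e3]
    ring

lemma U1 {r k : ℕ} (h : r*(3*r+1) = k*(3*k+1)) : r = k := by
  rcases lt_trichotomy r k with h1 | h1 | h1
  · nlinarith
  · exact h1
  · nlinarith
lemma U2 {r j : ℕ} (h : (r+1)*(3*r+2) = (j+1)*(3*j+2)) : r = j := by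
  rcases lt_trichotomy r j with h1 | h1 | h1
  · nlinarith
  · exact h1
  · nlinarith
lemma U3 {r k : ℕ} (h : r*(3*r+1) = (k+1)*(3*k+2)) : False := by
  rcases le_or_gt r k with h1 | h1
  · nlinarith
  · nlinarith

open scoped Classical in
lemma qcard (n : ℕ) : ((DPfin n).card : ZMod 2) = if IsPent n then 1 else 0 := by
  classical
  rcases Nat.eq_zero_or_pos n with rfl | hn
  · have hD : DPfin 0 = {∅} := by
      ext S
      rw [mem_DPfin, mem_singleton]
      constructor
      · rintro ⟨h0, hsum⟩
        by_contra hne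
        obtain ⟨x, hx⟩ := Finset.nonempty_iff_ne_empty.2 hne
        have h1 : x ≤ ∑ y ∈ S, y := Finset.single_le_sum (fun i _ => Nat.zero_le i) hx
        have h2 : x ≠ 0 := fun h => h0 (h ▸ hx)
        omega
      · rintro rfl; simp
    rw [hD]
    have : IsPent 0 := ⟨0, by omega⟩
    simp [this]
  · -- n ≥ 1
    have hsplit := Finset.card_filter_add_card_filter_not
      (s := DPfin n) (p := fun S => frk S = S)
    set Fix := (DPfin n).filter (fun S => frk S = S) with hFix
    set Mov := (DPfin n).filter (fun S => ¬ frk S = S) with hMov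
    have hmovmem : ∀ S ∈ Mov, S ∈ DPfin n ∧ frk S ≠ S := by
      intro S hS
      rw [hMov, mem_filter] at hS
      exact hS
    have hMovZero : ((Mov.card : ZMod 2)) = 0 := by
      have hsum : ∑ _x ∈ Mov, (1 : ZMod 2) = 0 := by
        apply Finset.sum_involution (fun S _ => frk S)
        · intro a ha; decide
        · intro a ha _
          exact (hmovmem a ha).2
        · intro a ha
          obtain ⟨haD, hane⟩ := hmovmem a ha
          rw [mem_DPfin] at haD
          rw [hMov, mem_filter, mem_DPfin]
          refine ⟨⟨frk_zero_notMem haD.1, by rw [frk_sum haD.1]; exact haD.2⟩, ?_⟩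
          intro heq
          have h2 := frk_invol haD.1
          exact hane (by rw [← heq]; exact h2)
        · intro a ha
          exact frk_invol ((mem_DPfin.1 (hmovmem a ha).1).1)
      rw [Finset.sum_const, nsmul_eq_mul, mul_one] at hsum
      exact hsum
    have hfixmem : ∀ S, S ∈ Fix ↔ ((0 ∉ S ∧ ∑ x ∈ S, x = n) ∧
        (S = ∅ ∨ ∃ k, 1 ≤ k ∧ (S = Icc k (2*k - 1) ∨ S = Icc (k+1) (2*k)))) := by
      intro S
      rw [hFix, mem_filter, mem_DPfin]
      constructor
      · rintro ⟨h1, h2⟩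
        exact ⟨h1, (frk_fixed_iff h1.1).1 h2⟩
      · rintro ⟨h1, h2⟩
        exact ⟨h1, (frk_fixed_iff h1.1).2 h2⟩
    have hcast : ((DPfin n).card : ZMod 2) = (Fix.card : ZMod 2) := by
      have : Fix.card + Mov.card = (DPfin n).card := hsplit
      rw [← this]
      push_cast
      rw [hMovZero, add_zero]
    rw [hcast]
    by_cases hp : IsPent n
    · rw [if_pos hp]
      obtain ⟨k, hk | hk⟩ := hp
      · -- 2n = k(3k+1) : fixed point Icc (k+1) (2k)
        have hk1 : 1 ≤ k := by
          rcases Nat.eq_zero_or_pos k with rfl | h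
          · omega
          · exact h
        have hFixeq : Fix = {Icc (k+1) (2*k)} := by
          ext S
          rw [hfixmem, mem_singleton]
          constructor
          · rintro ⟨⟨h0, hsum⟩, rfl | ⟨r, hr, rfl | rfl⟩⟩
            · exfalso
              simp at hsum
              omega
            · exfalso
              have := sum_stair1 hr
              rw [hsum] at this
              have h2 : r * (3*r-1) = (r - 1 + 1) * (3 * (r-1) + 2) := by
                cases' r with r
                · omega
                · simp only [Nat.succ_sub_one]
                  have : 3 * (r+1) - 1 = 3*r+2 := by omega
                  rw [this]
              exact U3 (by omega : k*(3*k+1) = ((r-1)+1)*(3*(r-1)+2))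
            · have := sum_stair2 r
              rw [hsum] at this
              have : r = k := U1 (by omega)
              rw [this]
          · rintro rfl
            have hs := sum_stair2 k
            refine ⟨⟨?_, by omega⟩, Or.inr ⟨k, hk1, Or.inr rfl⟩⟩
            intro h
            simp only [mem_Icc] at h
            omega
        rw [hFixeq]
        simp
      · -- 2n = (k+1)(3k+2) : fixed point Icc (k+1) (2k+1) = stair1 (k+1)
        have hFixeq : Fix = {Icc (k+1) (2*(k+1) - 1)} := by
          ext S
          rw [hfixmem, mem_singleton]
          constructor
          · rintro ⟨⟨h0, hsum⟩, rfl | ⟨r, hr, rfl | rfl⟩⟩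
            · exfalso
              simp at hsum
              omega
            · have := sum_stair1 hr
              rw [hsum] at this
              have h2 : r * (3*r-1) = (r - 1 + 1) * (3 * (r-1) + 2) := by
                cases' r with r
                · omega
                · simp only [Nat.succ_sub_one]
                  have : 3 * (r+1) - 1 = 3*r+2 := by omega
                  rw [this]
              have : r - 1 = k := U2 (by omega)
              have hrk : r = k + 1 := by omega
              rw [hrk]
            · exfalso
              have := sum_stair2 r
              rw [hsum] at this
              exact U3 (by omega : r*(3*r+1) = (k+1)*(3*k+2))
          · rintro rfl
            have hs := sum_stair1 (show 1 ≤ k+1 by omega)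
            have h2 : (k+1) * (3*(k+1)-1) = (k + 1) * (3 * k + 2) := by
              have : 3 * (k+1) - 1 = 3*k+2 := by omega
              rw [this]
            refine ⟨⟨?_, by omega⟩, Or.inr ⟨k+1, by omega, Or.inl rfl⟩⟩
            intro h
            simp only [mem_Icc] at h
            omega
        rw [hFixeq]
        simp
    · rw [if_neg hp]
      have hFixeq : Fix = ∅ := by
        ext S
        rw [hfixmem]
        simp only [Finset.notMem_empty, iff_false]
        rintro ⟨⟨h0, hsum⟩, rfl | ⟨r, hr, rfl | rfl⟩⟩
        · simp at hsum
          omega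
        · have := sum_stair1 hr
          rw [hsum] at this
          apply hp
          refine ⟨r - 1, Or.inr ?_⟩
          cases' r with r
          · omega
          · simp only [Nat.succ_sub_one]
            have e : 3 * (r+1) - 1 = 3*r+2 := by omega
            rw [e] at this
            omega
        · have := sum_stair2 r
          rw [hsum] at this
          exact hp ⟨r, Or.inl (by omega)⟩
      rw [hFixeq]
      simp


/-! ### convolution -/

lemma msup_mem {m : Multiset ℕ} (h : m ≠ 0) : m.sup ∈ m := by
  induction m using Multiset.induction_on with
  | empty => simp at h
  | cons a s ih =>
    rw [Multiset.sup_cons]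
    rcases eq_or_ne s 0 with rfl | hs
    · simp
    · rcases le_total s.sup a with h1 | h1
      · rw [sup_eq_left.2 h1]; exact Multiset.mem_cons_self a s
      · rw [sup_eq_right.2 h1]; exact Multiset.mem_cons_of_mem (ih hs)

def Pfin (n : ℕ) : Finset (Multiset ℕ) :=
  (Finset.univ : Finset (Nat.Partition n)).image Nat.Partition.parts

lemma mem_Pfin {n : ℕ} {m : Multiset ℕ} :
    m ∈ Pfin n ↔ (∀ i ∈ m, i ≠ 0) ∧ m.sum = n := by
  rw [Pfin, Finset.mem_image]
  constructor
  · rintro ⟨p, _, rfl⟩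
    exact ⟨fun i hi => (p.parts_pos hi).ne', p.parts_sum⟩
  · rintro ⟨h1, h2⟩
    exact ⟨⟨m, fun {i} hi => Nat.pos_of_ne_zero (h1 i hi), h2⟩, Finset.mem_univ _, rfl⟩

lemma card_Pfin (n : ℕ) : (Pfin n).card = Fintype.card (Nat.Partition n) := by
  rw [Pfin, Finset.card_image_of_injective _ (fun p q h => Nat.Partition.ext h)]
  rfl

def Wfin (n : ℕ) : Finset (Finset ℕ × Multiset ℕ) :=
  (range (n+1)).biUnion (fun j => DPfin j ×ˢ Pfin (n - j))

lemma mem_Wfin {n : ℕ} {x : Finset ℕ × Multiset ℕ} :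
    x ∈ Wfin n ↔ 0 ∉ x.1 ∧ (∀ i ∈ x.2, i ≠ 0) ∧ (∑ y ∈ x.1, y) + x.2.sum = n := by
  rw [Wfin, Finset.mem_biUnion]
  constructor
  · rintro ⟨j, hj, hx⟩
    rw [Finset.mem_product, mem_DPfin, mem_Pfin] at hx
    rw [mem_range] at hj
    exact ⟨hx.1.1, hx.2.1, by rw [hx.1.2, hx.2.2]; omega⟩
  · rintro ⟨h1, h2, h3⟩
    refine ⟨∑ y ∈ x.1, y, ?_, ?_⟩
    · rw [mem_range]; omega
    · rw [Finset.mem_product, mem_DPfin, mem_Pfin]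
      exact ⟨⟨h1, rfl⟩, h2, by omega⟩

lemma card_Wfin (n : ℕ) :
    (Wfin n).card = ∑ j ∈ range (n+1), (DPfin j).card * Fintype.card (Nat.Partition (n - j)) := by
  rw [Wfin, Finset.card_biUnion]
  · refine Finset.sum_congr rfl (fun j _ => ?_)
    rw [Finset.card_product, card_Pfin]
  · intro i _ j _ hij
    simp only [Function.onFun, Finset.disjoint_left]
    intro x hx hx2
    rw [Finset.mem_product, mem_DPfin] at hx hx2
    exact hij (hx.1.2 ▸ hx2.1.2)

def mv (x : Finset ℕ × Multiset ℕ) : Finset ℕ × Multiset ℕ :=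
  if mx x.1 < x.2.sup then (insert x.2.sup x.1, x.2.erase x.2.sup)
  else (x.1.erase (mx x.1), (mx x.1) ::ₘ x.2)

lemma mv_spec {n : ℕ} (hn : 1 ≤ n) {x : Finset ℕ × Multiset ℕ} (hx : x ∈ Wfin n) :
    mv x ∈ Wfin n ∧ mv (mv x) = x ∧ mv x ≠ x := by
  obtain ⟨h0, hpos, hsum⟩ := mem_Wfin.1 hx
  obtain ⟨S, m⟩ := x
  simp only at h0 hpos hsum
  by_cases hlt : mx S < m.sup
  · -- move m.sup into S
    set b := m.sup with hb
    have hb1 : 1 ≤ b := by omega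
    have hm0 : m ≠ 0 := by
      intro h
      rw [h] at hb
      simp [Multiset.sup_zero] at hb
      omega
    have hbm : b ∈ m := msup_mem hm0
    have hbS : b ∉ S := fun h => absurd (le_mx h) (by omega)
    have hmv : mv (S, m) = (insert b S, m.erase b) := by
      rw [mv, if_pos hlt]
    have hsum2 : (b ::ₘ m.erase b) = m := Multiset.cons_erase hbm
    have hsum3 : b + (m.erase b).sum = m.sum := by
      conv_rhs => rw [← hsum2]
      rw [Multiset.sum_cons]
    have hmem : mv (S, m) ∈ Wfin n := by
      rw [hmv, mem_Wfin]
      dsimp only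
      refine ⟨?_, ?_, ?_⟩
      · simp only [Finset.mem_insert]
        rintro (h | h)
        · omega
        · exact h0 h
      · intro i hi
        exact hpos i (Multiset.mem_of_mem_erase hi)
      · rw [Finset.sum_insert hbS]
        omega
    refine ⟨hmem, ?_, ?_⟩
    · rw [hmv]
      have hmx : mx (insert b S) = b := by
        apply mx_eq (Finset.mem_insert_self b S)
        intro y hy
        rcases Finset.mem_insert.1 hy with rfl | hy
        · exact le_refl _
        · have := le_mx hy; omega
      have hsup : (m.erase b).sup ≤ b := by
        rw [Multiset.sup_le]
        intro y hy
        exact hb ▸ Multiset.le_sup (Multiset.mem_of_mem_erase hy)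
      rw [mv, if_neg (by simp only [hmx]; omega)]
      simp only [hmx]
      rw [Finset.erase_insert hbS, hsum2]
    · intro h
      rw [hmv, Prod.ext_iff] at h
      dsimp only at h
      have := congrArg Finset.card h.1
      rw [Finset.card_insert_of_notMem hbS] at this
      omega
  · -- move mx S into m
    have hSne : S.Nonempty := by
      by_contra h
      rw [Finset.not_nonempty_iff_eq_empty] at h
      subst h
      have h1 : m.sum = n := by simpa using hsum
      have hm0 : m ≠ 0 := by
        intro h
        rw [h] at h1
        simp at h1
        omega
      have h2 := msup_mem hm0
      have h3 := hpos _ h2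
      have h4 : mx (∅ : Finset ℕ) = 0 := by simp [mx]
      omega
    set a := mx S with ha
    have haS : a ∈ S := mx_mem hSne
    have ha1 : 1 ≤ a := by
      rcases Nat.eq_zero_or_pos a with h | h
      · exact absurd (h ▸ haS) h0
      · exact h
    have hmv : mv (S, m) = (S.erase a, a ::ₘ m) := by
      rw [mv, if_neg hlt]
    have hsum3 : (∑ y ∈ S.erase a, y) + a = ∑ y ∈ S, y :=
      Finset.sum_erase_add S _ haS
    have hmem : mv (S, m) ∈ Wfin n := by
      rw [hmv, mem_Wfin]
      dsimp only
      refine ⟨fun h => h0 (Finset.mem_of_mem_erase h), ?_, ?_⟩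
      · intro i hi
        rcases Multiset.mem_cons.1 hi with rfl | hi
        · omega
        · exact hpos i hi
      · rw [Multiset.sum_cons]
        omega
    refine ⟨hmem, ?_, ?_⟩
    · rw [hmv]
      have hsup : (a ::ₘ m).sup = a := by
        rw [Multiset.sup_cons, sup_eq_left]
        omega
      have hmx : mx (S.erase a) < a := by
        rcases Finset.eq_empty_or_nonempty (S.erase a) with h | h
        · rw [h]
          have : mx (∅ : Finset ℕ) = 0 := by simp [mx]
          omega
        · have h1 := mx_mem h
          have h2 := Finset.mem_erase.1 h1
          have := le_mx h2.2
          omega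
      rw [mv, if_pos (by rw [hsup]; exact hmx)]
      simp only [hsup]
      rw [Finset.insert_erase haS, Multiset.erase_cons_head]
    · intro h
      rw [hmv, Prod.ext_iff] at h
      dsimp only at h
      have h5 := congrArg Finset.card h.1
      rw [Finset.card_erase_of_mem haS] at h5
      have h6 : 1 ≤ S.card := Finset.card_pos.2 hSne
      omega

lemma conv (n : ℕ) (hn : 1 ≤ n) :
    (∑ j ∈ range (n+1), ((DPfin j).card : ZMod 2)
      * (Fintype.card (Nat.Partition (n - j)) : ZMod 2)) = 0 := by
  have h1 : ∑ _x ∈ Wfin n, (1 : ZMod 2) = 0 := by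
    apply Finset.sum_involution (fun x _ => mv x)
    · intro a ha; decide
    · intro a ha _
      exact (mv_spec hn ha).2.2
    · intro a ha
      exact (mv_spec hn ha).1
    · intro a ha
      exact (mv_spec hn ha).2.1
  rw [Finset.sum_const, nsmul_eq_mul, mul_one] at h1
  have h2 := card_Wfin n
  have h3 : (((Wfin n).card : ℕ) : ZMod 2)
      = ∑ j ∈ range (n+1), ((DPfin j).card : ZMod 2) * (Fintype.card (Nat.Partition (n - j)) : ZMod 2) := by
    rw [h2]
    push_cast
    rfl
  rw [← h3, h1]

/-! ### final assembly -/

lemma pent_exists1 (k : ℕ) : ∃ G, 2 * G = k * (3 * k + 1) := by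
  rcases Nat.even_or_odd k with ⟨t, rfl⟩ | ⟨t, rfl⟩
  · exact ⟨t * (3 * (t + t) + 1), by ring⟩
  · exact ⟨(2 * t + 1) * (3 * t + 2), by ring⟩

lemma pent_exists2 (k : ℕ) : ∃ G, 2 * G = (k + 1) * (3 * k + 2) := by
  rcases Nat.even_or_odd k with ⟨t, rfl⟩ | ⟨t, rfl⟩
  · exact ⟨(t + t + 1) * (3 * t + 1), by ring⟩
  · exact ⟨(t + 1) * (6 * t + 5), by ring⟩

lemma L1 {j k : ℕ} (hk : 1 ≤ k) (hp : IsPent j) (h : 2 * j < k * (3 * k + 1)) :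
    2 * j + 2 * k ≤ k * (3 * k + 1) := by
  obtain ⟨t, ht | ht⟩ := hp
  · have htk : t + 1 ≤ k := by
      by_contra hcon
      push_neg at hcon
      nlinarith
    nlinarith
  · have htk : t + 1 ≤ k := by
      by_contra hcon
      push_neg at hcon
      nlinarith
    nlinarith

lemma L2 {j k : ℕ} (hp : IsPent j) (h : k * (3 * k + 1) < 2 * j) :
    (k + 1) * (3 * k + 2) ≤ 2 * j := by
  obtain ⟨t, ht | ht⟩ := hp
  · have htk : k + 1 ≤ t := by
      by_contra hcon
      push_neg at hcon
      nlinarith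
    nlinarith
  · have htk : k ≤ t := by
      by_contra hcon
      push_neg at hcon
      nlinarith
    nlinarith

lemma L3 {j k : ℕ} (hp : IsPent j) (h : (k + 1) * (3 * k + 2) < 2 * j) :
    (k + 1) * (3 * k + 4) ≤ 2 * j := by
  obtain ⟨t, ht | ht⟩ := hp
  · have htk : k + 1 ≤ t := by
      by_contra hcon
      push_neg at hcon
      nlinarith
    nlinarith
  · have htk : k + 1 ≤ t := by
      by_contra hcon
      push_neg at hcon
      nlinarith
    nlinarith

open scoped Classical in
lemma key (n : ℕ) (hn : 1 ≤ n) :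
    ∑ j ∈ (range (n+1)).filter (fun j => IsPent j),
      (Fintype.card (Nat.Partition (n - j)) : ZMod 2) = 0 := by
  rw [Finset.sum_filter]
  have h2 : ∀ j ∈ range (n+1), (if IsPent j then (Fintype.card (Nat.Partition (n - j)) : ZMod 2) else 0)
      = ((DPfin j).card : ZMod 2) * (Fintype.card (Nat.Partition (n - j)) : ZMod 2) := by
    intro j _
    rw [qcard j, ite_mul, one_mul, zero_mul]
  rw [Finset.sum_congr rfl h2]
  exact conv n hn

open scoped Classical in
lemma not_eventually_even (N : ℕ) :
    ¬ (∀ m, N ≤ m → (Fintype.card (Nat.Partition m) : ZMod 2) = 0) := by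
  intro heven
  set k := N + 1 with hk
  obtain ⟨G, hG⟩ := pent_exists1 k
  have hpent : IsPent G := ⟨k, Or.inl hG⟩
  have hG4 : k * (3 * k + 1) ≥ 4 * k := by nlinarith
  have hG1 : 1 ≤ G := by omega
  have hsplit : (range (G+1)).filter (fun j => IsPent j)
      = insert G ((range G).filter (fun j => IsPent j)) := by
    ext j
    simp only [Finset.mem_filter, Finset.mem_insert, Finset.mem_range]
    constructor
    · rintro ⟨h1, h2⟩
      rcases eq_or_lt_of_le (Nat.lt_succ_iff.1 h1) with h3 | h3
      · exact Or.inl h3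
      · exact Or.inr ⟨h3, h2⟩
    · rintro (rfl | ⟨h1, h2⟩)
      · exact ⟨Nat.lt_succ_self _, hpent⟩
      · exact ⟨by omega, h2⟩
  have hkey := key G hG1
  rw [hsplit, Finset.sum_insert (by simp)] at hkey
  have hzero : ∑ j ∈ (range G).filter (fun j => IsPent j),
      (Fintype.card (Nat.Partition (G - j)) : ZMod 2) = 0 := by
    apply Finset.sum_eq_zero
    intro j hj
    simp only [Finset.mem_filter, Finset.mem_range] at hj
    apply heven
    have := L1 (k := k) (by omega) hj.2 (by omega)
    omega
  rw [hzero, add_zero, Nat.sub_self] at hkey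
  have h1 : Fintype.card (Nat.Partition 0) = 1 := Fintype.card_unique
  rw [h1] at hkey
  simp at hkey

open scoped Classical in
lemma not_eventually_odd (N : ℕ) :
    ¬ (∀ m, N ≤ m → (Fintype.card (Nat.Partition m) : ZMod 2) = 1) := by
  intro hodd
  set k := 2 * N + 2 with hk
  obtain ⟨G1, hG1⟩ := pent_exists1 k
  obtain ⟨G2, hG2⟩ := pent_exists2 k
  have hpent2 : IsPent G2 := ⟨k, Or.inr hG2⟩
  have he1 : (k + 1) * (3 * k + 2) = k * (3 * k + 1) + 4 * k + 2 := by ring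
  have hgap : G2 = G1 + 2 * k + 1 := by omega
  have hG4 : k * (3 * k + 1) ≥ 4 * k := by nlinarith
  have hG1pos : 1 ≤ G1 := by omega
  -- first count
  have hA1 : (range (G1 + 2 * N + 1)).filter (fun j => IsPent j)
      = (range (G1 + 1)).filter (fun j => IsPent j) := by
    ext j
    simp only [Finset.mem_filter, Finset.mem_range]
    constructor
    · rintro ⟨h1, h2⟩
      refine ⟨?_, h2⟩
      by_contra hcon
      push_neg at hcon
      have := L2 (k := k) h2 (by omega)
      omega
    · rintro ⟨h1, h2⟩
      exact ⟨by omega, h2⟩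
  have hA2 : (range (G2 + 2 * N + 1)).filter (fun j => IsPent j)
      = (range (G2 + 1)).filter (fun j => IsPent j) := by
    ext j
    simp only [Finset.mem_filter, Finset.mem_range]
    constructor
    · rintro ⟨h1, h2⟩
      refine ⟨?_, h2⟩
      by_contra hcon
      push_neg at hcon
      have h3 := L3 (k := k) h2 (by omega)
      have he2 : (k + 1) * (3 * k + 4) = (k + 1) * (3 * k + 2) + 2 * k + 2 := by ring
      omega
    · rintro ⟨h1, h2⟩
      exact ⟨by omega, h2⟩
  have hcount1 : (((range (G1 + 1)).filter (fun j => IsPent j)).card : ZMod 2) = 0 := by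
    have hkey := key (G1 + 2 * N) (by omega)
    rw [hA1] at hkey
    have : ∀ j ∈ (range (G1 + 1)).filter (fun j => IsPent j),
        (Fintype.card (Nat.Partition (G1 + 2 * N - j)) : ZMod 2) = 1 := by
      intro j hj
      simp only [Finset.mem_filter, Finset.mem_range] at hj
      exact hodd _ (by omega)
    rw [Finset.sum_congr rfl this, Finset.sum_const, nsmul_eq_mul, mul_one] at hkey
    exact hkey
  have hcount2 : (((range (G2 + 1)).filter (fun j => IsPent j)).card : ZMod 2) = 0 := by
    have hkey := key (G2 + 2 * N) (by omega)
    rw [hA2] at hkey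
    have : ∀ j ∈ (range (G2 + 1)).filter (fun j => IsPent j),
        (Fintype.card (Nat.Partition (G2 + 2 * N - j)) : ZMod 2) = 1 := by
      intro j hj
      simp only [Finset.mem_filter, Finset.mem_range] at hj
      exact hodd _ (by omega)
    rw [Finset.sum_congr rfl this, Finset.sum_const, nsmul_eq_mul, mul_one] at hkey
    exact hkey
  -- relate the two counts
  have hsets : (range (G2 + 1)).filter (fun j => IsPent j)
      = insert G2 ((range (G1 + 1)).filter (fun j => IsPent j)) := by
    ext j
    simp only [Finset.mem_filter, Finset.mem_insert, Finset.mem_range]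
    constructor
    · rintro ⟨h1, h2⟩
      rcases Nat.lt_or_ge G1 j with h3 | h3
      · left
        have := L2 (k := k) h2 (by omega)
        omega
      · exact Or.inr ⟨by omega, h2⟩
    · rintro (rfl | ⟨h1, h2⟩)
      · exact ⟨Nat.lt_succ_self _, hpent2⟩
      · exact ⟨by omega, h2⟩
  have hnotmem : G2 ∉ (range (G1 + 1)).filter (fun j => IsPent j) := by
    simp only [Finset.mem_filter, Finset.mem_range]
    rintro ⟨h1, _⟩
    omega
  rw [hsets, Finset.card_insert_of_notMem hnotmem] at hcount2
  rw [Nat.cast_add, hcount1, Nat.cast_one, zero_add] at hcount2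
  exact one_ne_zero hcount2

end Kolberg

/-- The partition function `p(n)` takes each value of parity infinitely often. -/
theorem stmt15 :
    {n : ℕ | Fintype.card (Nat.Partition n) % 2 = 0}.Infinite ∧
    {n : ℕ | Fintype.card (Nat.Partition n) % 2 = 1}.Infinite := by
  constructor
  · by_contra h
    have hfin := Set.not_infinite.1 h
    obtain ⟨N, hN⟩ := hfin.bddAbove
    apply Kolberg.not_eventually_odd (N + 1)
    intro m hm
    have hmem : m ∉ {n | Fintype.card (Nat.Partition n) % 2 = 0} := by
      intro hmem
      have := hN hmem
      omega
    simp only [Set.mem_setOf_eq] at hmem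
    have hmod : Fintype.card (Nat.Partition m) % 2 = 1 := by omega
    rw [← ZMod.natCast_mod _ 2, hmod, Nat.cast_one]
  · by_contra h
    have hfin := Set.not_infinite.1 h
    obtain ⟨N, hN⟩ := hfin.bddAbove
    apply Kolberg.not_eventually_even (N + 1)
    intro m hm
    have hmem : m ∉ {n : ℕ | Fintype.card (Nat.Partition n) % 2 = 1} := by
      intro hmem
      have := hN hmem
      omega
    simp only [Set.mem_setOf_eq] at hmem
    have hmod : Fintype.card (Nat.Partition m) % 2 = 0 := by omega
    rw [← ZMod.natCast_mod _ 2, hmod, Nat.cast_zero]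
end

section
/- For any n, the number of partitions of n into distinct odd parts is odd if and only if p(n) is odd. -/
open Finset

lemma involution_parity {α : Type*} [DecidableEq α] (f : α → α) :
    ∀ (s : Finset α), (∀ x ∈ s, f x ∈ s) → (∀ x ∈ s, f (f x) = x) →
    s.card % 2 = (s.filter fun x => f x = x).card % 2 := by
  intro s
  induction s using Finset.strongInduction with
  | _ s ih =>
    intro hmap hinv
    by_cases hex : ∃ x ∈ s, f x ≠ x
    · obtain ⟨x, hx, hfx⟩ := hex
      set s' := s \ {x, f x} with hs'
      have hfxs : f x ∈ s := hmap x hx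
      have hsub : s' ⊂ s := by
        refine Finset.ssubset_iff_of_subset (Finset.sdiff_subset) |>.mpr ⟨x, hx, by simp [hs']⟩
      have hmap' : ∀ y ∈ s', f y ∈ s' := by
        intro y hy
        rw [hs', Finset.mem_sdiff] at hy ⊢
        refine ⟨hmap y hy.1, ?_⟩
        intro hmem
        simp only [Finset.mem_insert, Finset.mem_singleton] at hmem
        rcases hmem with h | h
        · apply hy.2; simp only [Finset.mem_insert, Finset.mem_singleton]
          right; rw [← h, hinv y hy.1]
        · apply hy.2; simp only [Finset.mem_insert, Finset.mem_singleton]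
          left
          have := hinv y hy.1
          rw [h] at this
          rw [← this, hinv x hx]
      have hinv' : ∀ y ∈ s', f (f y) = y := fun y hy => hinv y (Finset.mem_sdiff.mp hy).1
      have hcard : s.card = s'.card + 2 := by
        rw [hs', Finset.card_sdiff_of_subset (by intro y hy; simp only [Finset.mem_insert, Finset.mem_singleton] at hy; rcases hy with rfl|rfl <;> assumption)]
        have h2 : ({x, f x} : Finset α).card = 2 := by
          rw [Finset.card_insert_of_notMem (by simpa using (Ne.symm hfx)), Finset.card_singleton]
        have hle : ({x, f x} : Finset α).card ≤ s.card :=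
          Finset.card_le_card (by intro y hy; simp only [Finset.mem_insert, Finset.mem_singleton] at hy; rcases hy with rfl|rfl <;> assumption)
        rw [h2] at hle ⊢
        omega
      have hfilter : s.filter (fun y => f y = y) = s'.filter (fun y => f y = y) := by
        ext y
        simp only [Finset.mem_filter, hs', Finset.mem_sdiff, Finset.mem_insert,
          Finset.mem_singleton]
        constructor
        · rintro ⟨hy, hfy⟩
          refine ⟨⟨hy, ?_⟩, hfy⟩
          rintro (rfl | h)
          · exact hfx hfy
          · subst h
            rw [hinv x hx] at hfy
            exact hfx hfy.symm
        · rintro ⟨⟨hy, _⟩, hfy⟩; exact ⟨hy, hfy⟩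
      rw [hcard, hfilter, ← ih s' hsub hmap' hinv']
      omega
    · push_neg at hex
      congr 1
      rw [Finset.filter_true_of_mem hex]

lemma card_cellsOfRowLens : ∀ (w : List ℕ), (YoungDiagram.cellsOfRowLens w).card = w.sum := by
  intro w
  induction w with
  | nil => simp [YoungDiagram.cellsOfRowLens]
  | cons a l ih =>
    rw [YoungDiagram.cellsOfRowLens]
    rw [Finset.card_union_of_disjoint, Finset.card_map, ih]
    · simp [List.sum_cons]
    · rw [Finset.disjoint_left]
      rintro ⟨i, j⟩ hmem hmem2
      simp only [Finset.mem_product, Finset.mem_singleton] at hmem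
      simp only [Finset.mem_map, Function.Embedding.coe_prodMap] at hmem2
      obtain ⟨⟨i', j'⟩, _, heq⟩ := hmem2
      simp only [Prod.mk.injEq, Prod.map] at heq
      have := heq.1
      simp only [Function.Embedding.coeFn_mk] at this
      omega

lemma card_ofRowLens (w : List ℕ) (hw : w.SortedGE) :
    (YoungDiagram.ofRowLens w hw).card = w.sum := card_cellsOfRowLens w

open Finset

/-- key monotonicity for strictly decreasing lists -/
lemma sorted_gt_add_anti {l : List ℕ} (hl : l.Pairwise (· > ·)) :
    ∀ {i j : ℕ}, i ≤ j → j < l.length → j + l.getD j 0 ≤ i + l.getD i 0 := by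
  intro i j hij hj
  induction j with
  | zero => interval_cases i; rfl
  | succ j ihj =>
    rcases Nat.eq_or_lt_of_le hij with rfl | h
    · rfl
    have hjl : j < l.length := by omega
    have hstep : l.getD (j+1) 0 < l.getD j 0 := by
      rw [List.getD_eq_getElem l 0 hj, List.getD_eq_getElem l 0 hjl]
      exact List.pairwise_iff_get.mp hl ⟨j, hjl⟩ ⟨j+1, hj⟩ (by simp)
    have := ihj (by omega) hjl
    omega

def hookPredd (l : List ℕ) (c : ℕ × ℕ) : Prop :=
  min c.1 c.2 < l.length ∧ max c.1 c.2 < min c.1 c.2 + l.getD (min c.1 c.2) 0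

instance (l : List ℕ) (c : ℕ × ℕ) : Decidable (hookPredd l c) := by unfold hookPredd; infer_instance

lemma hookPredd_lt {l : List ℕ} (hl : l.Pairwise (· > ·)) {c : ℕ × ℕ} (hc : hookPredd l c) :
    c.1 < l.length + l.getD 0 0 ∧ c.2 < l.length + l.getD 0 0 := by
  obtain ⟨h1, h2⟩ := hc
  have := sorted_gt_add_anti hl (Nat.zero_le _) h1
  have hc1 : c.1 ≤ max c.1 c.2 := le_max_left _ _
  have hc2 : c.2 ≤ max c.1 c.2 := le_max_right _ _
  omega

/-- The self-conjugate Young diagram with diagonal hooks of half-lengths given by `l`. -/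
def hookDiagram (l : List ℕ) (hl : l.Pairwise (· > ·)) : YoungDiagram where
  cells := (Finset.range (l.length + l.getD 0 0) ×ˢ Finset.range (l.length + l.getD 0 0)).filter
      (hookPredd l)
  isLowerSet := by
    rintro ⟨i2, j2⟩ ⟨i1, j1⟩ ⟨hi : i1 ≤ i2, hj : j1 ≤ j2⟩ hc
    simp only [Finset.coe_filter, Set.mem_setOf_eq, Finset.mem_product, Finset.mem_range] at hc ⊢
    obtain ⟨-, hp⟩ := hc
    obtain ⟨h1, h2⟩ := hp
    simp only at h1 h2 ⊢
    have hmin : min i1 j1 ≤ min i2 j2 := by omega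
    have hmax : max i1 j1 ≤ max i2 j2 := by omega
    have hkey := sorted_gt_add_anti hl hmin h1
    have hp' : hookPredd l (i1, j1) := by
      constructor
      · show min i1 j1 < l.length
        omega
      · show max i1 j1 < min i1 j1 + l.getD (min i1 j1) 0
        omega
    exact ⟨by simpa [Finset.mem_range] using hookPredd_lt hl hp', hp'⟩

lemma mem_hookDiagram (l : List ℕ) (hl : l.Pairwise (· > ·)) (c : ℕ × ℕ) :
    c ∈ hookDiagram l hl ↔ hookPredd l c := by
  change c ∈ Finset.filter (hookPredd l) _ ↔ _
  rw [Finset.mem_filter]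
  constructor
  · exact fun h => h.2
  · intro h
    have := hookPredd_lt hl h
    exact ⟨by rw [Finset.mem_product, Finset.mem_range, Finset.mem_range]; exact this, h⟩

lemma hookDiagram_transpose (l : List ℕ) (hl : l.Pairwise (· > ·)) :
    (hookDiagram l hl).transpose = hookDiagram l hl := by
  ext c
  rw [YoungDiagram.mem_cells, YoungDiagram.mem_cells, YoungDiagram.mem_transpose,
    mem_hookDiagram, mem_hookDiagram]
  unfold hookPredd
  rcases c with ⟨i, j⟩
  simp [min_comm, max_comm]

def hookSet (l : List ℕ) (m : ℕ) : Finset (ℕ × ℕ) :=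
  ({m} ×ˢ Finset.Ico m (m + l.getD m 0)) ∪ (Finset.Ico (m+1) (m + l.getD m 0) ×ˢ {m})

lemma mem_hookSet {l : List ℕ} {m : ℕ} {c : ℕ × ℕ} :
    c ∈ hookSet l m ↔ (c.1 = m ∧ m ≤ c.2 ∧ c.2 < m + l.getD m 0) ∨
      (m + 1 ≤ c.1 ∧ c.1 < m + l.getD m 0 ∧ c.2 = m) := by
  unfold hookSet
  simp only [Finset.mem_union, Finset.mem_product, Finset.mem_singleton, Finset.mem_Ico]
  tauto

lemma min_eq_of_mem_hookSet {l : List ℕ} {m : ℕ} {c : ℕ × ℕ} (h : c ∈ hookSet l m) :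
    min c.1 c.2 = m := by
  rw [mem_hookSet] at h
  omega

lemma card_hookSet {l : List ℕ} {m : ℕ} (hm : m < l.length) (hp : ∀ x ∈ l, 0 < x) :
    (hookSet l m).card = 2 * l.getD m 0 - 1 := by
  have hpos : 0 < l.getD m 0 := by
    rw [List.getD_eq_getElem l 0 hm]
    exact hp _ (List.getElem_mem hm)
  unfold hookSet
  rw [Finset.card_union_of_disjoint]
  · rw [Finset.card_product, Finset.card_product, Nat.card_Ico, Nat.card_Ico]
    simp only [Finset.card_singleton]
    omega
  · rw [Finset.disjoint_left]
    rintro ⟨a, b⟩ h1 h2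
    simp only [Finset.mem_product, Finset.mem_singleton, Finset.mem_Ico] at h1 h2
    omega

lemma hookDiagram_cells (l : List ℕ) (hl : l.Pairwise (· > ·)) (hp : ∀ x ∈ l, 0 < x) :
    (hookDiagram l hl).cells = (Finset.range l.length).biUnion (hookSet l) := by
  ext c
  rw [YoungDiagram.mem_cells, mem_hookDiagram, Finset.mem_biUnion]
  constructor
  · rintro ⟨h1, h2⟩
    refine ⟨min c.1 c.2, Finset.mem_range.mpr h1, ?_⟩
    rw [mem_hookSet]
    omega
  · rintro ⟨m, hm, hc⟩
    rw [Finset.mem_range] at hm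
    have hmin := min_eq_of_mem_hookSet hc
    rw [mem_hookSet] at hc
    constructor
    · omega
    · rw [hmin]; omega

lemma card_hookDiagram (l : List ℕ) (hl : l.Pairwise (· > ·)) (hp : ∀ x ∈ l, 0 < x) :
    (hookDiagram l hl).card = ∑ m ∈ Finset.range l.length, (2 * l.getD m 0 - 1) := by
  rw [YoungDiagram.card, hookDiagram_cells l hl hp, Finset.card_biUnion]
  · exact Finset.sum_congr rfl fun m hm => card_hookSet (Finset.mem_range.mp hm) hp
  · intro m _ m' _ hmm'
    rw [Function.onFun, Finset.disjoint_left]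
    intro c hc hc'
    exact hmm' ((min_eq_of_mem_hookSet hc).symm.trans (min_eq_of_mem_hookSet hc'))

lemma hookDiagram_row_mem (l : List ℕ) (hl : l.Pairwise (· > ·)) (hp : ∀ x ∈ l, 0 < x)
    {m : ℕ} (hm : m < l.length) (j : ℕ) :
    ((m, j) ∈ hookDiagram l hl) ↔ j < m + l.getD m 0 := by
  have hpos : 0 < l.getD m 0 := by
    rw [List.getD_eq_getElem l 0 hm]; exact hp _ (List.getElem_mem hm)
  rw [mem_hookDiagram]
  rcases le_or_gt m j with h | h
  · show min m j < l.length ∧ max m j < min m j + l.getD (min m j) 0 ↔ _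
    rw [min_eq_left h, max_eq_right h]
    omega
  · show min m j < l.length ∧ max m j < min m j + l.getD (min m j) 0 ↔ _
    rw [min_eq_right h.le, max_eq_left h.le]
    have hjl : j < l.length := by omega
    have hkey := sorted_gt_add_anti hl h.le hm
    have hposj : 0 < l.getD j 0 := by
      rw [List.getD_eq_getElem l 0 hjl]; exact hp _ (List.getElem_mem hjl)
    omega

lemma hookDiagram_rowLen (l : List ℕ) (hl : l.Pairwise (· > ·)) (hp : ∀ x ∈ l, 0 < x)
    {m : ℕ} (hm : m < l.length) :
    (hookDiagram l hl).rowLen m = m + l.getD m 0 := by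
  have hpos : 0 < l.getD m 0 := by
    rw [List.getD_eq_getElem l 0 hm]; exact hp _ (List.getElem_mem hm)
  have h1 : (m, m + l.getD m 0 - 1) ∈ hookDiagram l hl := by
    rw [hookDiagram_row_mem l hl hp hm]; omega
  have h2 : (m, m + l.getD m 0) ∉ hookDiagram l hl := by
    rw [hookDiagram_row_mem l hl hp hm]; omega
  rw [YoungDiagram.mem_iff_lt_rowLen] at h1 h2
  omega

lemma hookDiagram_diag (l : List ℕ) (hl : l.Pairwise (· > ·)) (hp : ∀ x ∈ l, 0 < x) (i : ℕ) :
    ((i, i) ∈ hookDiagram l hl) ↔ i < l.length := by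
  rw [mem_hookDiagram]
  show min i i < l.length ∧ max i i < min i i + l.getD (min i i) 0 ↔ _
  rw [min_self, max_self]
  constructor
  · exact fun h => h.1
  · intro h
    have hpos : 0 < l.getD i 0 := by
      rw [List.getD_eq_getElem l 0 h]; exact hp _ (List.getElem_mem h)
    omega
lemma sort_coe_sorted (l : List ℕ) (hl : l.Pairwise (· ≥ ·)) :
    (↑l : Multiset ℕ).sort (· ≥ ·) = l :=
  List.Perm.eq_of_pairwise' (Multiset.pairwise_sort _ _) hl
    (Multiset.coe_eq_coe.mp (Multiset.sort_eq _ _))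

def partitionDiagram {n : ℕ} (P : Nat.Partition n) : YoungDiagram :=
  YoungDiagram.ofRowLens (P.parts.sort (· ≥ ·)) ((P.parts.pairwise_sort _).sortedGE)

lemma card_partitionDiagram {n : ℕ} (P : Nat.Partition n) : (partitionDiagram P).card = n := by
  rw [partitionDiagram, card_ofRowLens]
  rw [← Multiset.sum_coe, Multiset.sort_eq, P.parts_sum]

lemma rowLens_partitionDiagram {n : ℕ} (P : Nat.Partition n) :
    (partitionDiagram P).rowLens = P.parts.sort (· ≥ ·) :=
  YoungDiagram.rowLens_ofRowLens_eq_self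
    (fun x hx => P.parts_pos (by rwa [← Multiset.mem_sort (r := (· ≥ ·))]))

lemma card_eq_sum_rowLens (μ : YoungDiagram) : μ.card = μ.rowLens.sum := by
  conv_lhs => rw [← YoungDiagram.ofRowLens_to_rowLens_eq_self (μ := μ)]
  rw [card_ofRowLens]

def diagramPartition {n : ℕ} (μ : YoungDiagram) (h : μ.card = n) : Nat.Partition n where
  parts := ↑μ.rowLens
  parts_pos hx := μ.pos_of_mem_rowLens _ (by simpa using hx)
  parts_sum := by rw [Multiset.sum_coe, ← card_eq_sum_rowLens, h]

lemma ofRowLens_congr {w w' : List ℕ} (hw : w.SortedGE) (hw' : w'.SortedGE)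
    (h : w = w') : YoungDiagram.ofRowLens w hw = YoungDiagram.ofRowLens w' hw' := by
  subst h; rfl

lemma partitionDiagram_diagramPartition {n : ℕ} (μ : YoungDiagram) (h : μ.card = n) :
    partitionDiagram (diagramPartition μ h) = μ := by
  have hs : ((diagramPartition μ h).parts.sort (· ≥ ·)) = μ.rowLens :=
    sort_coe_sorted _ μ.rowLens_sorted.pairwise
  exact (ofRowLens_congr _ μ.rowLens_sorted hs).trans YoungDiagram.ofRowLens_to_rowLens_eq_self

lemma diagramPartition_partitionDiagram {n : ℕ} (P : Nat.Partition n) (h) :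
    diagramPartition (partitionDiagram P) h = P := by
  ext1
  show ↑(partitionDiagram P).rowLens = P.parts
  rw [rowLens_partitionDiagram, Multiset.sort_eq]

lemma card_transpose (μ : YoungDiagram) : μ.transpose.card = μ.card := by
  simp [YoungDiagram.transpose, YoungDiagram.card]

def conj {n : ℕ} (P : Nat.Partition n) : Nat.Partition n :=
  diagramPartition (partitionDiagram P).transpose
    (by rw [card_transpose, card_partitionDiagram])

lemma partitionDiagram_conj {n : ℕ} (P : Nat.Partition n) :
    partitionDiagram (conj P) = (partitionDiagram P).transpose :=
  partitionDiagram_diagramPartition _ _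

lemma conj_conj {n : ℕ} (P : Nat.Partition n) : conj (conj P) = P := by
  ext1
  show ↑(partitionDiagram (conj P)).transpose.rowLens = P.parts
  rw [partitionDiagram_conj, YoungDiagram.transpose_transpose, rowLens_partitionDiagram,
    Multiset.sort_eq]

lemma conj_eq_self_iff {n : ℕ} (P : Nat.Partition n) :
    conj P = P ↔ (partitionDiagram P).transpose = partitionDiagram P := by
  constructor
  · intro h
    conv_lhs => rw [← partitionDiagram_conj, h]
  · intro h
    ext1
    show ↑(partitionDiagram P).transpose.rowLens = P.parts
    rw [h, rowLens_partitionDiagram, Multiset.sort_eq]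

open Finset

lemma sum_getD (w : List ℕ) : ∑ m ∈ Finset.range w.length, w.getD m 0 = w.sum := by
  induction w with
  | nil => simp
  | cons a t ih =>
    rw [List.length_cons, Finset.sum_range_succ', List.sum_cons]
    simp only [List.getD_cons_succ, List.getD_cons_zero]
    rw [ih]
    omega

lemma sorted_gt_of_ge_nodup {l : List ℕ} (h1 : l.Pairwise (· ≥ ·)) (h2 : l.Nodup) :
    l.Pairwise (· > ·) :=
  (List.Pairwise.and h1 h2).imp fun ⟨h, h'⟩ => lt_of_le_of_ne h (Ne.symm h')

lemma sorted_ge_of_gt {l : List ℕ} (h : l.Pairwise (· > ·)) : l.Pairwise (· ≥ ·) :=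
  h.imp le_of_lt

lemma hookDiagram_congr {l l' : List ℕ} (hl : l.Pairwise (· > ·)) (hl' : l'.Pairwise (· > ·))
    (h : l = l') : hookDiagram l hl = hookDiagram l' hl' := by subst h; rfl

lemma diagramPartition_congr {n : ℕ} {μ μ' : YoungDiagram} (h : μ.card = n) (h' : μ'.card = n)
    (heq : μ = μ') : diagramPartition μ h = diagramPartition μ' h' := by subst heq; rfl

/-- half-lengths of the hooks attached to a partition with distinct odd parts -/
def halfList {n : ℕ} (P : Nat.Partition n) : List ℕ :=
  (P.parts.sort (· ≥ ·)).map (fun x => (x + 1) / 2)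

section OddF

variable {n : ℕ} {P : Nat.Partition n}

lemma sort_mem_odd (hP : ∀ x ∈ P.parts, x % 2 = 1) :
    ∀ x ∈ P.parts.sort (· ≥ ·), x % 2 = 1 := fun x hx =>
  hP x (by rwa [Multiset.mem_sort] at hx)

lemma sort_sorted_gt (hP : P.parts.Nodup) :
    (P.parts.sort (· ≥ ·)).Pairwise (· > ·) :=
  sorted_gt_of_ge_nodup (P.parts.pairwise_sort _)
    (by rw [← Multiset.coe_nodup, Multiset.sort_eq]; exact hP)

lemma halfList_sorted (hP : P.parts.Nodup ∧ ∀ x ∈ P.parts, x % 2 = 1) :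
    (halfList P).Pairwise (· > ·) := by
  rw [halfList, List.pairwise_map]
  refine List.Pairwise.imp_of_mem ?_ (sort_sorted_gt hP.1)
  intro x y hx hy hxy
  have h1 := sort_mem_odd hP.2 x hx
  have h2 := sort_mem_odd hP.2 y hy
  show (y + 1) / 2 < (x + 1) / 2
  omega

lemma halfList_pos (hP : ∀ x ∈ P.parts, x % 2 = 1) : ∀ x ∈ halfList P, 0 < x := by
  intro x hx
  rw [halfList, List.mem_map] at hx
  obtain ⟨y, hy, rfl⟩ := hx
  have := sort_mem_odd hP y hy
  omega

lemma halfList_card (hP : P.parts.Nodup ∧ ∀ x ∈ P.parts, x % 2 = 1) :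
    (hookDiagram (halfList P) (halfList_sorted hP)).card = n := by
  rw [card_hookDiagram _ _ (halfList_pos hP.2)]
  have hlen : (halfList P).length = (P.parts.sort (· ≥ ·)).length := by
    rw [halfList, List.length_map]
  rw [hlen]
  have : ∀ m ∈ Finset.range (P.parts.sort (· ≥ ·)).length,
      2 * (halfList P).getD m 0 - 1 = (P.parts.sort (· ≥ ·)).getD m 0 := by
    intro m hm
    rw [Finset.mem_range] at hm
    rw [List.getD_eq_getElem _ _ (by rwa [hlen]), List.getD_eq_getElem _ _ hm]
    simp only [halfList, List.getElem_map]
    have := sort_mem_odd hP.2 _ (List.getElem_mem hm)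
    omega
  rw [Finset.sum_congr rfl this, sum_getD, ← Multiset.sum_coe, Multiset.sort_eq, P.parts_sum]

/-- The partition with distinct odd parts mapped to its self-conjugate partner. -/
def oddF (P : Nat.Partition n) (hP : P.parts.Nodup ∧ ∀ x ∈ P.parts, x % 2 = 1) :
    Nat.Partition n :=
  diagramPartition (hookDiagram (halfList P) (halfList_sorted hP)) (halfList_card hP)

lemma partitionDiagram_oddF (hP : P.parts.Nodup ∧ ∀ x ∈ P.parts, x % 2 = 1) :
    partitionDiagram (oddF P hP) = hookDiagram (halfList P) (halfList_sorted hP) :=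
  partitionDiagram_diagramPartition _ _

lemma oddF_selfconj (hP : P.parts.Nodup ∧ ∀ x ∈ P.parts, x % 2 = 1) :
    conj (oddF P hP) = oddF P hP :=
  (conj_eq_self_iff _).mpr (by rw [partitionDiagram_oddF]; exact hookDiagram_transpose _ _)

end OddF

lemma hookDiagram_inj {l l' : List ℕ} (hl : l.Pairwise (· > ·)) (hl' : l'.Pairwise (· > ·))
    (hp : ∀ x ∈ l, 0 < x) (hp' : ∀ x ∈ l', 0 < x)
    (h : hookDiagram l hl = hookDiagram l' hl') : l = l' := by
  have hlen : l.length = l'.length := by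
    have h1 := hookDiagram_diag l hl hp l'.length
    have h2 := hookDiagram_diag l' hl' hp' l.length
    rw [h] at h1
    rw [← h] at h2
    rw [hookDiagram_diag l' hl' hp'] at h1
    rw [hookDiagram_diag l hl hp] at h2
    omega
  refine List.ext_getElem hlen ?_
  intro m h1 h2
  have e1 := hookDiagram_rowLen l hl hp h1
  have e2 := hookDiagram_rowLen l' hl' hp' h2
  rw [h] at e1
  rw [e2] at e1
  rw [List.getD_eq_getElem _ _ h1, List.getD_eq_getElem _ _ h2] at e1
  omega

lemma oddF_inj {n : ℕ} {P P' : Nat.Partition n}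
    (hP : P.parts.Nodup ∧ ∀ x ∈ P.parts, x % 2 = 1)
    (hP' : P'.parts.Nodup ∧ ∀ x ∈ P'.parts, x % 2 = 1)
    (h : oddF P hP = oddF P' hP') : P = P' := by
  have hd : hookDiagram (halfList P) (halfList_sorted hP)
      = hookDiagram (halfList P') (halfList_sorted hP') := by
    rw [← partitionDiagram_oddF hP, ← partitionDiagram_oddF hP', h]
  have hhalf := hookDiagram_inj _ _ (halfList_pos hP.2) (halfList_pos hP'.2) hd
  have hlen : (P.parts.sort (· ≥ ·)).length = (P'.parts.sort (· ≥ ·)).length := by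
    have := congrArg List.length hhalf
    rwa [halfList, halfList, List.length_map, List.length_map] at this
  have hsort : P.parts.sort (· ≥ ·) = P'.parts.sort (· ≥ ·) := by
    refine List.ext_getElem hlen ?_
    intro m h1 h2
    have := congrArg (fun w => w.getD m 0) hhalf
    simp only [halfList] at this
    rw [List.getD_eq_getElem _ _ (by rwa [List.length_map]),
      List.getD_eq_getElem _ _ (by rwa [List.length_map]),
      List.getElem_map, List.getElem_map] at this
    have o1 := sort_mem_odd hP.2 _ (List.getElem_mem h1)
    have o2 := sort_mem_odd hP'.2 _ (List.getElem_mem h2)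
    omega
  ext1
  rw [← Multiset.sort_eq P.parts (· ≥ ·), ← Multiset.sort_eq P'.parts (· ≥ ·), hsort]

lemma oddF_surj {n : ℕ} (Q : Nat.Partition n) (hQ : conj Q = Q) :
    ∃ (P : Nat.Partition n) (hP : P.parts.Nodup ∧ ∀ x ∈ P.parts, x % 2 = 1),
      oddF P hP = Q := by
  set μ := partitionDiagram Q with hμdef
  have hμt : μ.transpose = μ := (conj_eq_self_iff Q).mp hQ
  have hcard : μ.card = n := card_partitionDiagram Q
  have hex : ∃ i, (i, i) ∉ μ := by
    refine ⟨μ.colLen 0, fun hc => ?_⟩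
    have h0 : (μ.colLen 0, 0) ∈ μ := μ.up_left_mem le_rfl (Nat.zero_le _) hc
    rw [YoungDiagram.mem_iff_lt_colLen] at h0
    omega
  set d := Nat.find hex with hddef
  have hdiag : ∀ i, (i, i) ∈ μ ↔ i < d := by
    intro i
    constructor
    · intro hi
      by_contra h'
      push_neg at h'
      exact Nat.find_spec hex (μ.up_left_mem h' h' hi)
    · intro hi
      have := Nat.find_min hex hi
      rwa [not_not] at this
  have hrowpos : ∀ i, i < d → i < μ.rowLen i := fun i hi =>
    YoungDiagram.mem_iff_lt_rowLen.mp ((hdiag i).mpr hi)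
  set l := (List.range d).map (fun i => μ.rowLen i - i) with hldef
  have hlen : l.length = d := by simp [hldef]
  have hget : ∀ m, m < d → l.getD m 0 = μ.rowLen m - m := by
    intro m hm
    rw [List.getD_eq_getElem _ _ (by omega), List.getElem_of_eq hldef]
    simp
  have hl : l.Pairwise (· > ·) := by
    rw [hldef, List.pairwise_map]
    refine List.Pairwise.imp_of_mem ?_ (List.pairwise_lt_range (n := d))
    intro i j hi hj hij
    rw [List.mem_range] at hi hj
    have h1 := μ.rowLen_anti i j (le_of_lt hij)
    have h2 := hrowpos j hj
    show μ.rowLen j - j < μ.rowLen i - i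
    omega
  have hp : ∀ x ∈ l, 0 < x := by
    intro x hx
    rw [hldef, List.mem_map] at hx
    obtain ⟨i, hi, rfl⟩ := hx
    rw [List.mem_range] at hi
    have := hrowpos i hi
    omega
  have key : ∀ i j : ℕ, i ≤ j → ((i, j) ∈ hookDiagram l hl ↔ (i, j) ∈ μ) := by
    intro i j hij
    rw [mem_hookDiagram]
    show min i j < l.length ∧ max i j < min i j + l.getD (min i j) 0 ↔ _
    rw [min_eq_left hij, max_eq_right hij, YoungDiagram.mem_iff_lt_rowLen, hlen]
    constructor
    · rintro ⟨h1, h2⟩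
      rw [hget i h1] at h2
      have := hrowpos i h1
      omega
    · intro hj
      have hirow : i < μ.rowLen i := by omega
      have hid : i < d := (hdiag i).mp (YoungDiagram.mem_iff_lt_rowLen.mpr hirow)
      rw [hget i hid]
      exact ⟨hid, by omega⟩
  have hμeq : hookDiagram l hl = μ := by
    apply YoungDiagram.ext
    ext ⟨i, j⟩
    rw [YoungDiagram.mem_cells, YoungDiagram.mem_cells]
    rcases le_total i j with hij | hij
    · exact key i j hij
    · have h1 : ((i, j) ∈ hookDiagram l hl) ↔ (j, i) ∈ hookDiagram l hl := by
        conv_lhs => rw [← hookDiagram_transpose l hl]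
        rw [YoungDiagram.mem_transpose]
        rfl
      have h2 : ((i, j) ∈ μ) ↔ (j, i) ∈ μ := by
        conv_lhs => rw [← hμt]
        rw [YoungDiagram.mem_transpose]
        rfl
      rw [h1, h2]
      exact key j i hij
  set a := l.map (fun b => 2 * b - 1) with hadef
  have ha_sum : (↑a : Multiset ℕ).sum = n := by
    rw [Multiset.sum_coe, ← sum_getD]
    have hlena : a.length = l.length := by rw [hadef, List.length_map]
    rw [hlena]
    have : ∀ m ∈ Finset.range l.length, a.getD m 0 = 2 * l.getD m 0 - 1 := by
      intro m hm
      rw [Finset.mem_range] at hm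
      rw [List.getD_eq_getElem _ _ (by omega), List.getD_eq_getElem _ _ hm,
        List.getElem_of_eq hadef, List.getElem_map]
    rw [Finset.sum_congr rfl this, ← card_hookDiagram l hl hp, hμeq, hcard]
  have ha_pos : ∀ x ∈ (↑a : Multiset ℕ), 0 < x := by
    intro x hx
    rw [Multiset.mem_coe, hadef, List.mem_map] at hx
    obtain ⟨b, hb, rfl⟩ := hx
    have := hp b hb
    omega
  set P : Nat.Partition n := ⟨↑a, fun {x} hx => ha_pos x hx, ha_sum⟩ with hPdef
  have ha_sorted : a.Pairwise (· > ·) := by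
    rw [hadef, List.pairwise_map]
    refine List.Pairwise.imp_of_mem ?_ hl
    intro x y hx hy hxy
    have := hp y hy
    show 2 * y - 1 < 2 * x - 1
    omega
  have hP : P.parts.Nodup ∧ ∀ x ∈ P.parts, x % 2 = 1 := by
    constructor
    · show (↑a : Multiset ℕ).Nodup
      rw [Multiset.coe_nodup]
      exact ha_sorted.imp (fun h => ne_of_gt h)
    · intro x hx
      rw [hPdef] at hx
      simp only [Multiset.mem_coe, hadef, List.mem_map] at hx
      obtain ⟨b, hb, rfl⟩ := hx
      have := hp b hb
      omega
  refine ⟨P, hP, ?_⟩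
  have hsort : P.parts.sort (· ≥ ·) = a := sort_coe_sorted a (sorted_ge_of_gt ha_sorted)
  have hhalf : halfList P = l := by
    rw [halfList, hsort, hadef, List.map_map]
    have : ∀ b ∈ l, ((fun x => (x + 1) / 2) ∘ fun b => 2 * b - 1) b = id b := by
      intro b hb
      have := hp b hb
      show (2 * b - 1 + 1) / 2 = b
      omega
    rw [List.map_congr_left this, List.map_id]
  rw [oddF]
  rw [show Q = diagramPartition μ hcard from (diagramPartition_partitionDiagram Q hcard).symm]
  exact diagramPartition_congr _ _ ((hookDiagram_congr _ hl hhalf).trans hμeq)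

/-- `Dab a b n`: partitions of `n` into distinct parts each congruent to `b` mod `a`. -/
def Dab (a b n : ℕ) : Finset (Nat.Partition n) :=
  Finset.univ.filter (fun P => P.parts.Nodup ∧ ∀ x ∈ P.parts, x % a = b % a)

/-- The number of partitions of `n` into distinct odd parts is odd iff `p(n)` is odd. -/
theorem stmt19 (n : ℕ) :
    Odd (Dab 2 1 n).card ↔ Odd (Fintype.card (Nat.Partition n)) := by
  have hmem : ∀ P : Nat.Partition n, P ∈ Dab 2 1 n ↔
      (P.parts.Nodup ∧ ∀ x ∈ P.parts, x % 2 = 1) := by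
    intro P
    simp [Dab]
  have hbij : (Dab 2 1 n).card
      = (Finset.univ.filter fun P : Nat.Partition n => conj P = P).card := by
    refine Finset.card_bij (fun P hP => oddF P ((hmem P).mp hP)) ?_ ?_ ?_
    · intro P hP
      simp only [Finset.mem_filter, Finset.mem_univ, true_and]
      exact oddF_selfconj _
    · intro P hP P' hP' h
      exact oddF_inj _ _ h
    · intro Q hQ
      rw [Finset.mem_filter] at hQ
      obtain ⟨P, hP, hPQ⟩ := oddF_surj Q hQ.2
      exact ⟨P, (hmem P).mpr hP, hPQ⟩
  have hpar := involution_parity (conj (n := n)) Finset.univ (fun x _ => Finset.mem_univ _)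
      (fun x _ => conj_conj x)
  rw [Nat.odd_iff, Nat.odd_iff, hbij, ← hpar]
  rfl
end
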